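/- arXiv:2304.06313 — 5 statements merged into one kernel-verified Lean document; each statement's English description precedes it below -/
import Mathlib

section
/- For every real number α with 0 < α < 1/2, the numbers p₀ = (α − 2α²)/(α(2α³ − 4α² + 1)), p₀′ = (1 − α)(α − 2α²)/(2α³ − 4α² + 1) and p_k = (α/(1 − α))^{k−1}·(α − 2α²)/(2α³ − 4α² + 1) for k ≥ 1 satisfy the stationarity (balance) equations of the selfish-mining Markov chain: p₁ = α·p₀, p₀′ = (1 − α)·p₁, p₀ = (1 − α)·p₀ + p₀′ + (1 − α)·p₂, and p_k = α·p_{k−1} + (1 − α)·p_{k+1} for every k ≥ 2. -/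
/-- For `0 < α < 1/2`, the numbers `p₀ = (α − 2α²)/(α(2α³ − 4α² + 1))`,
`p₀′ = (1 − α)(α − 2α²)/(2α³ − 4α² + 1)` and
`p_k = (α/(1−α))^{k−1}·(α − 2α²)/(2α³ − 4α² + 1)` for `k ≥ 1` satisfy the balance
equations of the Eyal–Sirer selfish-mining Markov chain:
`p₁ = α·p₀`, `p₀′ = (1 − α)·p₁`, `p₀ = (1 − α)·p₀ + p₀′ + (1 − α)·p₂`, and
`p_k = α·p_{k−1} + (1 − α)·p_{k+1}` for every `k ≥ 2`. -/
theorem stationary_balance_equations (α : ℝ) (h0 : 0 < α) (h1 : α < 1/2)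
    (p0 p0' : ℝ) (p : ℕ → ℝ)
    (hp0 : p0 = (α - 2 * α ^ 2) / (α * (2 * α ^ 3 - 4 * α ^ 2 + 1)))
    (hp0' : p0' = (1 - α) * (α - 2 * α ^ 2) / (2 * α ^ 3 - 4 * α ^ 2 + 1))
    (hp : ∀ k : ℕ, 1 ≤ k →
      p k = (α / (1 - α)) ^ (k - 1) * (α - 2 * α ^ 2) / (2 * α ^ 3 - 4 * α ^ 2 + 1)) :
    p 1 = α * p0 ∧
    p0' = (1 - α) * p 1 ∧
    p0 = (1 - α) * p0 + p0' + (1 - α) * p 2 ∧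
    ∀ k : ℕ, 2 ≤ k → p k = α * p (k - 1) + (1 - α) * p (k + 1) := by
  have hαne : α ≠ 0 := ne_of_gt h0
  have hD : (2 * α ^ 3 - 4 * α ^ 2 + 1) > 0 := by nlinarith
  have hDne : (2 * α ^ 3 - 4 * α ^ 2 + 1) ≠ 0 := ne_of_gt hD
  have h1a : (1 : ℝ) - α ≠ 0 := by nlinarith
  have hp1 := hp 1 le_rfl
  have hp2 := hp 2 (by norm_num)
  simp only [show (1:ℕ) - 1 = 0 from rfl, show (2:ℕ) - 1 = 1 from rfl, pow_zero, pow_one] at hp1 hp2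
  refine ⟨?_, ?_, ?_, ?_⟩
  · rw [hp1, hp0]; field_simp
  · rw [hp0', hp1]; ring
  · rw [hp0, hp0', hp2]; field_simp; ring
  · intro k hk
    obtain ⟨m, rfl⟩ := Nat.exists_eq_add_of_le hk
    have e1 : 2 + m - 1 = m + 1 := by omega
    have e2 : 2 + m - 1 - 1 = m := by omega
    have e3 : 2 + m + 1 - 1 = m + 2 := by omega
    rw [hp (2 + m) (by omega), hp (2 + m - 1) (by omega), hp (2 + m + 1) (by omega)]
    simp only [e1, e3, Nat.add_sub_cancel]
    rw [div_pow, div_pow, div_pow]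
    field_simp
    ring
end

section
/- For every real number α with 0 < α < 1/2, the progress rate R(α) = 1 − α(1 − α)²/(2α³ − 4α² + 1) satisfies 1/2 < R(α) < 1. In particular the presence of a selfish-mining pool of any relative size α ∈ (0, 1/2) strictly slows down the growth of the main branch (R(α) < 1) but never slows it below half speed. -/
/-- For every `α` with `0 < α < 1/2`, the progress rate
`R(α) = 1 − α(1 − α)^2 / (2α³ − 4α² + 1)` of the main branch in the presence of a
selfish-mining pool of relative power `α` satisfies `1/2 < R(α) < 1`. -/
theorem progress_rate_bounds (α : ℝ) (h0 : 0 < α) (h1 : α < 1/2) :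
    1/2 < 1 - α * (1 - α) ^ 2 / (2 * α ^ 3 - 4 * α ^ 2 + 1) ∧
    1 - α * (1 - α) ^ 2 / (2 * α ^ 3 - 4 * α ^ 2 + 1) < 1 := by
  have hD : 0 < 2 * α ^ 3 - 4 * α ^ 2 + 1 := by
    nlinarith [sq_nonneg α, sq_nonneg (1 - 2*α), mul_pos h0 h0]
  constructor
  · have : α * (1 - α) ^ 2 / (2 * α ^ 3 - 4 * α ^ 2 + 1) < 1/2 :=
      (div_lt_iff₀ hD).mpr (by nlinarith)
    linarith
  · have hnum : 0 < α * (1 - α) ^ 2 := by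
      have h2 : (0:ℝ) < 1 - α := by linarith
      positivity
    have : 0 < α * (1 - α) ^ 2 / (2 * α ^ 3 - 4 * α ^ 2 + 1) := div_pos hnum hD
    linarith
end

section
/- The function R(α) = 1 − α(1 − α)²/(2α³ − 4α² + 1) is strictly decreasing on the interval (0, 1/2): for all real α₁, α₂ with 0 < α₁ < α₂ < 1/2 one has R(α₂) < R(α₁). Equivalently, the slowdown 1 − R(α) caused by a selfish pool strictly increases with the pool's relative size α. -/
/-- The progress rate `R(α) = 1 − α(1 − α)²/(2α³ − 4α² + 1)` is strictly
decreasing on `(0, 1/2)`: for all `0 < α₁ < α₂ < 1/2` one has `R(α₂) < R(α₁)`. -/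
theorem progress_rate_strict_anti (α₁ α₂ : ℝ)
    (h0 : 0 < α₁) (h12 : α₁ < α₂) (h2 : α₂ < 1/2) :
    1 - α₂ * (1 - α₂) ^ 2 / (2 * α₂ ^ 3 - 4 * α₂ ^ 2 + 1)
      < 1 - α₁ * (1 - α₁) ^ 2 / (2 * α₁ ^ 3 - 4 * α₁ ^ 2 + 1) := by
  have h01 : α₁ < 1/2 := h12.trans h2
  have h02 : 0 < α₂ := h0.trans h12
  have d1 : 0 < 2 * α₁ ^ 3 - 4 * α₁ ^ 2 + 1 := by nlinarith [sq_nonneg α₁, sq_nonneg (1 - 2*α₁)]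
  have d2 : 0 < 2 * α₂ ^ 3 - 4 * α₂ ^ 2 + 1 := by nlinarith [sq_nonneg α₂, sq_nonneg (1 - 2*α₂)]
  have key : α₁ * (1 - α₁) ^ 2 / (2 * α₁ ^ 3 - 4 * α₁ ^ 2 + 1)
      < α₂ * (1 - α₂) ^ 2 / (2 * α₂ ^ 3 - 4 * α₂ ^ 2 + 1) := by
    rw [div_lt_div_iff₀ d1 d2]
    nlinarith [mul_pos h0 h02, sq_nonneg (α₁ + α₂), sq_nonneg (α₁ - α₂),
      mul_pos (mul_pos h0 h02) (sub_pos.2 h12), sq_nonneg (1 - α₁ - α₂),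
      mul_pos (sub_pos.2 h12) (sub_pos.2 h2), mul_pos (sub_pos.2 h12) (sub_pos.2 h01),
      mul_pos (mul_pos (sub_pos.2 h12) (sub_pos.2 h2)) (sub_pos.2 h01)]
  linarith
end

section
/- For every real t with 0 < t < 1, the threshold function s ↦ t·(1 − α(1 − α)²/(2α³ − 4α² + 1)) with α = s/t is strictly decreasing in s on the interval (0, t/2): for a fixed combined power t of the selfish pool and honest miners, a larger selfish pool strictly lowers the minimum power a piggybacking pool needs in order to out-mine the public branch. -/
/-- For every `t` with `0 < t < 1`, the piggybacking threshold
`s ↦ t·(1 − α(1 − α)²/(2α³ − 4α² + 1))` with `α = s/t` is strictly decreasing in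
`s` on `(0, t/2)`: a larger selfish pool strictly lowers the minimum power a
piggybacking pool needs to out-mine the public branch. -/
theorem piggyback_threshold_strict_anti (t : ℝ) (ht0 : 0 < t) (ht1 : t < 1)
    (s₁ s₂ : ℝ) (h0 : 0 < s₁) (h12 : s₁ < s₂) (h2 : s₂ < t/2) :
    t * (1 - (s₂ / t) * (1 - s₂ / t) ^ 2
          / (2 * (s₂ / t) ^ 3 - 4 * (s₂ / t) ^ 2 + 1))
      < t * (1 - (s₁ / t) * (1 - s₁ / t) ^ 2
          / (2 * (s₁ / t) ^ 3 - 4 * (s₁ / t) ^ 2 + 1)) := by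
  set a := s₁ / t with ha
  set b := s₂ / t with hb
  have ha0 : 0 < a := div_pos h0 ht0
  have hab : a < b := by rw [ha, hb]; exact (div_lt_div_iff_of_pos_right ht0).mpr h12
  have hbh : b < 1/2 := by
    rw [hb, div_lt_iff₀ ht0]; linarith
  have hDa : 0 < 2 * a ^ 3 - 4 * a ^ 2 + 1 := by nlinarith [sq_nonneg a, sq_nonneg (a - 1/2)]
  have hDb : 0 < 2 * b ^ 3 - 4 * b ^ 2 + 1 := by nlinarith [sq_nonneg b, sq_nonneg (b - 1/2)]
  have key : a * (1 - a) ^ 2 / (2 * a ^ 3 - 4 * a ^ 2 + 1)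
      < b * (1 - b) ^ 2 / (2 * b ^ 3 - 4 * b ^ 2 + 1) := by
    rw [div_lt_div_iff₀ hDa hDb]
    nlinarith [mul_nonneg (sub_pos.mpr hab).le (sq_nonneg (1 - a - b)),
      mul_pos (sub_pos.mpr hab)
        (mul_pos (mul_pos ha0 (ha0.trans hab)) (by nlinarith : (0:ℝ) < 3 - 2*(a+b)))]
  have := mul_lt_mul_of_pos_left (sub_lt_sub_left key 1) ht0
  linarith
end

section
/- For every real number α with 0 < α < 1/2, the per-block discard probability (1 − α)·(1 − p₀ − p₀′), where p₀ = (α − 2α²)/(α(2α³ − 4α² + 1)) and p₀′ = (1 − α)(α − 2α²)/(2α³ − 4α² + 1), equals α(1 − α)²/(2α³ − 4α² + 1) and is strictly positive; hence a selfish-mining pool of any relative size α ∈ (0, 1/2) causes blocks to be discarded at a strictly positive rate. -/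
/-- For `0 < α < 1/2`, the per-block discard probability `(1 − α)(1 − p₀ − p₀′)`
of the Eyal–Sirer selfish-mining chain, where
`p₀ = (α − 2α²)/(α(2α³ − 4α² + 1))` and `p₀′ = (1 − α)(α − 2α²)/(2α³ − 4α² + 1)`,
equals `α(1 − α)²/(2α³ − 4α² + 1)` and is strictly positive: selfish mining
causes blocks to be discarded at a strictly positive rate. -/
theorem discard_rate_pos (α : ℝ) (h0 : 0 < α) (h1 : α < 1/2) :
    (1 - α) *
        (1 - (α - 2 * α ^ 2) / (α * (2 * α ^ 3 - 4 * α ^ 2 + 1))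
           - (1 - α) * (α - 2 * α ^ 2) / (2 * α ^ 3 - 4 * α ^ 2 + 1))
      = α * (1 - α) ^ 2 / (2 * α ^ 3 - 4 * α ^ 2 + 1) ∧
    0 < α * (1 - α) ^ 2 / (2 * α ^ 3 - 4 * α ^ 2 + 1) := by
  have hD : 0 < 2 * α ^ 3 - 4 * α ^ 2 + 1 := by nlinarith
  constructor
  · set D := 2 * α ^ 3 - 4 * α ^ 2 + 1 with hDd
    have := hD.ne'
    have := h0.ne'
    field_simp
    rw [hDd]
    ring
  · apply div_pos _ hD
    have : (0:ℝ) < 1 - α := by linarith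
    exact mul_pos h0 (pow_pos this 2)
end
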